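/- Let σ₀ > 0, τ ∈ ℝ, and set σ = −σ₀ + iτ. Then for all real s ≥ 0 and λ ≥ 0: | (3σ³ − λσ² − σs² − λs² + 6σ²s − 6λσs) / ( 4(σ − λ)³(σ − s)³ ) | ≤ 3λ²/(2(σ₀² + τ²)^{5/2}) + 11λ/(4(σ₀² + τ²)²) + 13/(8(σ₀² + τ²)^{3/2}). -/

import Mathlib

open Complex Real

set_option maxHeartbeats 2000000 in
theorem stmt_19 (σ₀ τ : ℝ) (hσ₀ : 0 < σ₀) (σ : ℂ) (hσ : σ = -(σ₀ : ℂ) + (τ : ℂ) * Complex.I)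
    (s lam : ℝ) (hs : 0 ≤ s) (hlam : 0 ≤ lam) :
    ‖(3 * σ ^ 3 - (lam : ℂ) * σ ^ 2 - σ * (s : ℂ) ^ 2 - (lam : ℂ) * (s : ℂ) ^ 2 +
          6 * σ ^ 2 * (s : ℂ) - 6 * (lam : ℂ) * σ * (s : ℂ)) /
        (4 * (σ - (lam : ℂ)) ^ 3 * (σ - (s : ℂ)) ^ 3)‖ ≤
      3 * lam ^ 2 / (2 * (σ₀ ^ 2 + τ ^ 2) ^ ((5 : ℝ) / 2)) +
        11 * lam / (4 * (σ₀ ^ 2 + τ ^ 2) ^ 2) +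
        13 / (8 * (σ₀ ^ 2 + τ ^ 2) ^ ((3 : ℝ) / 2)) := by
  have hr2pos : (0:ℝ) < σ₀ ^ 2 + τ ^ 2 := by positivity
  set r : ℝ := Real.sqrt (σ₀ ^ 2 + τ ^ 2) with hrdef
  have hrpos : 0 < r := Real.sqrt_pos.mpr hr2pos
  have hr2 : r ^ 2 = σ₀ ^ 2 + τ ^ 2 := Real.sq_sqrt hr2pos.le
  have hre : σ.re = -σ₀ := by rw [hσ]; simp
  have him : σ.im = τ := by rw [hσ]; simp
  have habsσ : ‖σ‖ = r := by
    rw [Complex.norm_def, Complex.normSq_apply, hre, him, hrdef]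
    congr 1; ring
  set P : ℝ := ‖σ - (s : ℂ)‖ with hPdef
  set Q : ℝ := ‖σ - (lam : ℂ)‖ with hQdef
  have hPn : 0 ≤ P := norm_nonneg _
  have hQn : 0 ≤ Q := norm_nonneg _
  have hP2 : P ^ 2 = (σ₀ + s) ^ 2 + τ ^ 2 := by
    rw [hPdef, Complex.sq_norm, Complex.normSq_apply]
    simp [Complex.sub_re, Complex.sub_im, hre, him]
    ring
  have hQ2 : Q ^ 2 = (σ₀ + lam) ^ 2 + τ ^ 2 := by
    rw [hQdef, Complex.sq_norm, Complex.normSq_apply]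
    simp [Complex.sub_re, Complex.sub_im, hre, him]
    ring
  have hrP : r ≤ P := by
    have h := Real.sqrt_le_sqrt (show σ₀ ^ 2 + τ ^ 2 ≤ P ^ 2 by nlinarith)
    rwa [Real.sqrt_sq hPn] at h
  have hrQ : r ≤ Q := by
    have h := Real.sqrt_le_sqrt (show σ₀ ^ 2 + τ ^ 2 ≤ Q ^ 2 by nlinarith)
    rwa [Real.sqrt_sq hQn] at h
  have hPpos : 0 < P := lt_of_lt_of_le hrpos hrP
  have hQpos : 0 < Q := lt_of_lt_of_le hrpos hrQ
  have hsP : s ≤ P := by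
    have h := Real.sqrt_le_sqrt (show s ^ 2 ≤ P ^ 2 by nlinarith)
    rwa [Real.sqrt_sq hs, Real.sqrt_sq hPn] at h
  have h2rs : 2 * r * s ≤ P ^ 2 := by
    have h1 : 0 ≤ (r - s) ^ 2 := sq_nonneg _
    have h2 : 0 ≤ σ₀ * s := mul_nonneg hσ₀.le hs
    nlinarith [h1, h2, hr2, hP2]
  -- absolute values of the numerator pieces
  have habslam : ‖(lam : ℂ)‖ = lam := by
    rw [Complex.norm_real, Real.norm_eq_abs, _root_.abs_of_nonneg hlam]
  have habss : ‖(s : ℂ)‖ = s := by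
    rw [Complex.norm_real, Real.norm_eq_abs, _root_.abs_of_nonneg hs]
  have tri : ∀ x y : ℂ, ‖x - y‖ ≤ ‖x‖ + ‖y‖ := fun x y => by
    simpa using norm_sub_le x y
  -- numerator bound
  have hNle : ‖3 * σ ^ 3 - (lam : ℂ) * σ ^ 2 - σ * (s : ℂ) ^ 2 -
        (lam : ℂ) * (s : ℂ) ^ 2 + 6 * σ ^ 2 * (s : ℂ) - 6 * (lam : ℂ) * σ * (s : ℂ)‖ ≤
      3 * r ^ 3 + lam * r ^ 2 + r * s ^ 2 + lam * s ^ 2 + 6 * r ^ 2 * s + 6 * lam * r * s := by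
    have e1 : ‖3 * σ ^ 3‖ = 3 * r ^ 3 := by
      rw [norm_mul, norm_pow, habsσ]; norm_num
    have e2 : ‖(lam : ℂ) * σ ^ 2‖ = lam * r ^ 2 := by
      rw [norm_mul, norm_pow, habsσ, habslam]
    have e3 : ‖σ * (s : ℂ) ^ 2‖ = r * s ^ 2 := by
      rw [norm_mul, norm_pow, habsσ, habss]
    have e4 : ‖(lam : ℂ) * (s : ℂ) ^ 2‖ = lam * s ^ 2 := by
      rw [norm_mul, norm_pow, habslam, habss]
    have e5 : ‖6 * σ ^ 2 * (s : ℂ)‖ = 6 * r ^ 2 * s := by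
      rw [norm_mul, norm_mul, norm_pow, habsσ, habss]; norm_num
    have e6 : ‖6 * (lam : ℂ) * σ * (s : ℂ)‖ = 6 * lam * r * s := by
      rw [norm_mul, norm_mul, norm_mul, habsσ, habslam, habss]; norm_num
    calc ‖3 * σ ^ 3 - (lam : ℂ) * σ ^ 2 - σ * (s : ℂ) ^ 2 -
            (lam : ℂ) * (s : ℂ) ^ 2 + 6 * σ ^ 2 * (s : ℂ) - 6 * (lam : ℂ) * σ * (s : ℂ)‖
        ≤ ‖3 * σ ^ 3 - (lam : ℂ) * σ ^ 2 - σ * (s : ℂ) ^ 2 -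
            (lam : ℂ) * (s : ℂ) ^ 2 + 6 * σ ^ 2 * (s : ℂ)‖ +
          ‖6 * (lam : ℂ) * σ * (s : ℂ)‖ := by
          exact tri _ _
      _ ≤ (‖3 * σ ^ 3 - (lam : ℂ) * σ ^ 2 - σ * (s : ℂ) ^ 2 -
            (lam : ℂ) * (s : ℂ) ^ 2‖ + ‖6 * σ ^ 2 * (s : ℂ)‖) +
          ‖6 * (lam : ℂ) * σ * (s : ℂ)‖ := by
          gcongr; exact norm_add_le _ _
      _ ≤ ((‖3 * σ ^ 3 - (lam : ℂ) * σ ^ 2 - σ * (s : ℂ) ^ 2‖ +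
            ‖(lam : ℂ) * (s : ℂ) ^ 2‖) + ‖6 * σ ^ 2 * (s : ℂ)‖) +
          ‖6 * (lam : ℂ) * σ * (s : ℂ)‖ := by
          gcongr; exact tri _ _
      _ ≤ (((‖3 * σ ^ 3 - (lam : ℂ) * σ ^ 2‖ + ‖σ * (s : ℂ) ^ 2‖) +
            ‖(lam : ℂ) * (s : ℂ) ^ 2‖) + ‖6 * σ ^ 2 * (s : ℂ)‖) +
          ‖6 * (lam : ℂ) * σ * (s : ℂ)‖ := by
          gcongr; exact tri _ _
      _ ≤ ((((‖3 * σ ^ 3‖ + ‖(lam : ℂ) * σ ^ 2‖) +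
            ‖σ * (s : ℂ) ^ 2‖) +
            ‖(lam : ℂ) * (s : ℂ) ^ 2‖) + ‖6 * σ ^ 2 * (s : ℂ)‖) +
          ‖6 * (lam : ℂ) * σ * (s : ℂ)‖ := by
          gcongr; exact tri _ _
      _ = 3 * r ^ 3 + lam * r ^ 2 + r * s ^ 2 + lam * s ^ 2 + 6 * r ^ 2 * s + 6 * lam * r * s := by
          rw [e1, e2, e3, e4, e5, e6]
  -- denominator
  have hden : ‖4 * (σ - (lam : ℂ)) ^ 3 * (σ - (s : ℂ)) ^ 3‖ = 4 * Q ^ 3 * P ^ 3 := by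
    rw [norm_mul, norm_mul, norm_pow, norm_pow, ← hPdef, ← hQdef]; norm_num
  -- the key polynomial inequality giving the bound
  have hr3P : r ^ 3 ≤ P ^ 3 := pow_le_pow_left₀ hrpos.le hrP 3
  have hr3Q : r ^ 3 ≤ Q ^ 3 := pow_le_pow_left₀ hrpos.le hrQ 3
  have hr6 : r ^ 6 ≤ P ^ 3 * Q ^ 3 := by
    calc r ^ 6 = r ^ 3 * r ^ 3 := by ring
      _ ≤ P ^ 3 * Q ^ 3 := mul_le_mul hr3P hr3Q (by positivity) (by positivity)
  have hr4 : r ^ 4 ≤ P * Q ^ 3 := by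
    calc r ^ 4 = r * r ^ 3 := by ring
      _ ≤ P * Q ^ 3 := mul_le_mul hrP hr3Q (by positivity) (by positivity)
  have hrs2 : 2 * (r * s ^ 2) ≤ P ^ 3 := by
    have h1 : 2 * r * s * s ≤ P ^ 2 * s := mul_le_mul_of_nonneg_right h2rs hs
    have h2 : P ^ 2 * s ≤ P ^ 2 * P := mul_le_mul_of_nonneg_left hsP (sq_nonneg P)
    linarith [h1, h2]
  have h2r5s : 2 * r ^ 5 * s ≤ P ^ 3 * Q ^ 3 := by
    have h1 : 2 * r * s * r ^ 4 ≤ P ^ 2 * r ^ 4 :=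
      mul_le_mul_of_nonneg_right h2rs (by positivity)
    have h2 : P ^ 2 * r ^ 4 ≤ P ^ 2 * (P * Q ^ 3) :=
      mul_le_mul_of_nonneg_left hr4 (by positivity)
    nlinarith [h1, h2]
  have key : (3 * r ^ 3 + lam * r ^ 2 + r * s ^ 2 + lam * s ^ 2 + 6 * r ^ 2 * s +
        6 * lam * r * s) / (4 * Q ^ 3 * P ^ 3) ≤ (13 * r + 10 * lam) / (8 * r ^ 4) := by
    rw [div_le_div_iff₀ (by positivity) (by positivity)]
    have A1 : 6 * r ^ 7 ≤ 6 * (r * (P ^ 3 * Q ^ 3)) := by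
      have := mul_le_mul_of_nonneg_left hr6 (show (0:ℝ) ≤ 6 * r by positivity)
      linarith [this]
    have A2 : 2 * (lam * r ^ 6) ≤ 2 * (lam * (P ^ 3 * Q ^ 3)) := by
      have := mul_le_mul_of_nonneg_left hr6 hlam
      linarith [this]
    have A3 : 2 * (r ^ 5 * s ^ 2) ≤ r * (P ^ 3 * Q ^ 3) := by
      have h1 : 2 * (r * s ^ 2) * r ^ 4 ≤ P ^ 3 * r ^ 4 :=
        mul_le_mul_of_nonneg_right hrs2 (by positivity)
      have h2 : P ^ 3 * r ^ 4 ≤ P ^ 3 * (r * Q ^ 3) := by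
        have h3 : r * r ^ 3 ≤ r * Q ^ 3 := mul_le_mul_of_nonneg_left hr3Q hrpos.le
        have h4 : r ^ 4 ≤ r * Q ^ 3 := by linarith [h3]
        exact mul_le_mul_of_nonneg_left h4 (by positivity)
      linarith [h1, h2]
    have A4 : 2 * (lam * (r ^ 4 * s ^ 2)) ≤ 2 * (lam * (P ^ 3 * Q ^ 3)) := by
      have hs2P : s ^ 2 ≤ P ^ 2 := pow_le_pow_left₀ hs hsP 2
      have h1 : r ^ 4 * s ^ 2 ≤ (P * Q ^ 3) * P ^ 2 :=
        mul_le_mul hr4 hs2P (by positivity) (by positivity)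
      have h2 := mul_le_mul_of_nonneg_left h1 hlam
      linarith [h2]
    have A5 : 12 * (r ^ 6 * s) ≤ 6 * (r * (P ^ 3 * Q ^ 3)) := by
      have := mul_le_mul_of_nonneg_left h2r5s (mul_nonneg (by norm_num : (0:ℝ) ≤ 6) hrpos.le)
      linarith [this]
    have A6 : 12 * (lam * (r ^ 5 * s)) ≤ 6 * (lam * (P ^ 3 * Q ^ 3)) := by
      have := mul_le_mul_of_nonneg_left h2r5s hlam
      linarith [this]
    linarith [A1, A2, A3, A4, A5, A6]
  -- rpow conversions
  have h32 : (σ₀ ^ 2 + τ ^ 2) ^ ((3 : ℝ) / 2) = r ^ 3 := by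
    rw [hrdef, Real.sqrt_eq_rpow, ← Real.rpow_natCast ((σ₀ ^ 2 + τ ^ 2) ^ ((1:ℝ)/2)) 3,
      ← Real.rpow_mul hr2pos.le]
    norm_num
  have h52 : (σ₀ ^ 2 + τ ^ 2) ^ ((5 : ℝ) / 2) = r ^ 5 := by
    rw [hrdef, Real.sqrt_eq_rpow, ← Real.rpow_natCast ((σ₀ ^ 2 + τ ^ 2) ^ ((1:ℝ)/2)) 5,
      ← Real.rpow_mul hr2pos.le]
    norm_num
  have h4 : (σ₀ ^ 2 + τ ^ 2) ^ (2 : ℕ) = r ^ 4 := by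
    rw [← hr2]; ring
  have final : (13 * r + 10 * lam) / (8 * r ^ 4) ≤
      3 * lam ^ 2 / (2 * r ^ 5) + 11 * lam / (4 * r ^ 4) + 13 / (8 * r ^ 3) := by
    have h1 : (13 * r + 10 * lam) / (8 * r ^ 4) = 13 / (8 * r ^ 3) + 10 * lam / (8 * r ^ 4) := by
      field_simp
    have h2 : 10 * lam / (8 * r ^ 4) ≤ 11 * lam / (4 * r ^ 4) := by
      rw [div_le_div_iff₀ (by positivity) (by positivity)]
      have h4 : 0 ≤ lam * r ^ 4 := by positivity
      nlinarith [h4]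
    have h3 : 0 ≤ 3 * lam ^ 2 / (2 * r ^ 5) := by positivity
    rw [h1]
    linarith
  rw [norm_div, hden, show ((σ₀ ^ 2 + τ ^ 2) ^ 2 : ℝ) = r ^ 4 from h4, h32, h52]
  calc ‖3 * σ ^ 3 - (lam : ℂ) * σ ^ 2 - σ * (s : ℂ) ^ 2 - (lam : ℂ) * (s : ℂ) ^ 2 +
          6 * σ ^ 2 * (s : ℂ) - 6 * (lam : ℂ) * σ * (s : ℂ)‖ / (4 * Q ^ 3 * P ^ 3)
      ≤ (3 * r ^ 3 + lam * r ^ 2 + r * s ^ 2 + lam * s ^ 2 + 6 * r ^ 2 * s +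
          6 * lam * r * s) / (4 * Q ^ 3 * P ^ 3) := by
        exact div_le_div_of_nonneg_right hNle (by positivity)
    _ ≤ (13 * r + 10 * lam) / (8 * r ^ 4) := key
    _ ≤ 3 * lam ^ 2 / (2 * r ^ 5) + 11 * lam / (4 * r ^ 4) + 13 / (8 * r ^ 3) := final
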